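/- With G and π_r as above and k ∈ ℤ nonzero, consider the vector ξ_k(s) = 2cos(ks) = e^{iks} + e^{-iks} in L²(ℝ/2πℤ). If (0,t) lies in the projective stabiliser of [ξ_k], i.e. there exists λ ∈ 𝕋 with cos(k(s−t)) = λ cos(ks) for all s, then λ = ±1 and t ∈ (π/k)ℤ. In particular G_{[ξ_k]} ∩ ({0}×ℝ) = {0} × (π/k)ℤ, which is a proper subgroup of G_{[η_k]} ∩ ({0}×ℝ) = {0} × ℝ. -/

import Mathlib

/- STATEMENT 6: For ξ_k(s) = 2cos(ks), k ≠ 0: if cos(k(s−t)) = λ cos(ks) for all s with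
|λ| = 1, then λ = ±1 and t ∈ (π/k)ℤ; in particular the set of such t is (π/k)ℤ, a
proper subset of ℝ (so G_{[ξ_k]} ∩ ({0}×ℝ) ⊊ G_{[η_k]} ∩ ({0}×ℝ) = {0}×ℝ). -/
theorem projective_stabiliser_cos_k (k : ℤ) (hk : k ≠ 0) :
    (∀ (t : ℝ) (c : ℂ), ‖c‖ = 1 →
      (∀ s : ℝ, (Real.cos (k * (s - t)) : ℂ) = c * (Real.cos (k * s) : ℂ)) →
      (c = 1 ∨ c = -1) ∧ ∃ n : ℤ, t = n * (Real.pi / k)) ∧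
    ({t : ℝ | ∃ c : ℂ, ‖c‖ = 1 ∧
        ∀ s : ℝ, (Real.cos (k * (s - t)) : ℂ) = c * (Real.cos (k * s) : ℂ)}
      = {t : ℝ | ∃ n : ℤ, t = n * (Real.pi / k)}) ∧
    {t : ℝ | ∃ n : ℤ, t = n * (Real.pi / k)} ≠ (Set.univ : Set ℝ) := by
  have hkR : (k : ℝ) ≠ 0 := Int.cast_ne_zero.mpr hk
  have main : ∀ (t : ℝ) (c : ℂ), ‖c‖ = 1 →
      (∀ s : ℝ, (Real.cos (k * (s - t)) : ℂ) = c * (Real.cos (k * s) : ℂ)) →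
      (c = 1 ∨ c = -1) ∧ ∃ n : ℤ, t = n * (Real.pi / k) := by
    intro t c hc h
    have h0 := h t
    rw [sub_self, mul_zero, Real.cos_zero] at h0
    -- h0 : (1 : ℂ) = c * cos (k t)
    have habs : |Real.cos (k * t)| = 1 := by
      have h0' := congrArg norm h0
      simp only [Complex.norm_real, Real.norm_eq_abs, norm_mul, hc, one_mul, abs_one] at h0'
      exact h0'.symm
    rcases abs_eq (by norm_num : (0:ℝ) ≤ 1) |>.mp habs with h1 | h1
    · have hcval : c = 1 := by
        rw [h1] at h0; simpa using h0.symm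
      have hsin : Real.sin (k * t) = 0 := by
        nlinarith [Real.sin_sq_add_cos_sq (k * t)]
      obtain ⟨n, hn⟩ := Real.sin_eq_zero_iff.mp hsin
      refine ⟨Or.inl hcval, n, ?_⟩
      field_simp
      linarith [hn]
    · have hcval : c = -1 := by
        rw [h1] at h0
        push_cast at h0
        linear_combination h0
      have hsin : Real.sin (k * t) = 0 := by
        nlinarith [Real.sin_sq_add_cos_sq (k * t)]
      obtain ⟨n, hn⟩ := Real.sin_eq_zero_iff.mp hsin
      refine ⟨Or.inr hcval, n, ?_⟩
      field_simp
      linarith [hn]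
  refine ⟨main, ?_, ?_⟩
  · ext t
    simp only [Set.mem_setOf_eq]
    constructor
    · rintro ⟨c, hc, h⟩
      exact (main t c hc h).2
    · rintro ⟨n, rfl⟩
      refine ⟨((-1 : ℂ)) ^ n, by simp, fun s => ?_⟩
      have harg : (k : ℝ) * (s - n * (Real.pi / k)) = k * s - n * Real.pi := by
        field_simp
      rw [harg, Real.cos_sub_int_mul_pi]
      push_cast
      ring
  · intro hEq
    have : (Real.pi / (2 * k)) ∈ {t : ℝ | ∃ n : ℤ, t = n * (Real.pi / k)} := by
      rw [hEq]; trivial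
    obtain ⟨n, hn⟩ := this
    have hπ : Real.pi ≠ 0 := Real.pi_ne_zero
    have h2 : (1 : ℝ) = 2 * n := by
      field_simp at hn
      have hz : (1 - 2 * (n : ℝ)) * (Real.pi * k) = 0 := by linear_combination (Real.pi * k) * hn
      rcases mul_eq_zero.mp hz with h | h
      · linarith
      · exact absurd h (mul_ne_zero hπ hkR)
    have : (1 : ℤ) = 2 * n := by exact_mod_cast h2
    omega
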